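/- The pure virtual twin group PVT_n is generated by the set {λ_{i,j} : 1 ≤ i < j ≤ n}. In particular, PVT_n has rank n(n−1)/2. -/

import Mathlib

namespace VTG

open scoped commutatorElement

abbrev Gen (n : ℕ) := Fin (n-1) ⊕ Fin (n-1)

/-- The free-group letter corresponding to the generator `s_i`. -/
def fs {n : ℕ} (i : Fin (n-1)) : FreeGroup (Gen n) := FreeGroup.of (Sum.inl i)

/-- The free-group letter corresponding to the generator `ρ_i`. -/
def fr {n : ℕ} (i : Fin (n-1)) : FreeGroup (Gen n) := FreeGroup.of (Sum.inr i)

/-- The defining relations of the virtual twin group `VT_n`. -/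
def vtRels (n : ℕ) : Set (FreeGroup (Gen n)) :=
  { w | (∃ i : Fin (n-1), w = fs i * fs i) ∨
        (∃ i j : Fin (n-1), (i : ℕ) + 2 ≤ (j : ℕ) ∧ w = ⁅fs i, fs j⁆) ∨
        (∃ i : Fin (n-1), w = fr i * fr i) ∨
        (∃ i j : Fin (n-1), (i : ℕ) + 2 ≤ (j : ℕ) ∧ w = ⁅fr i, fr j⁆) ∨
        (∃ i j : Fin (n-1), (j : ℕ) = (i : ℕ) + 1 ∧
          w = fr i * fr j * fr i * (fr j * fr i * fr j)⁻¹) ∨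
        (∃ i j : Fin (n-1), (i : ℕ) + 2 ≤ (j : ℕ) ∧ (w = ⁅fr i, fs j⁆ ∨ w = ⁅fs i, fr j⁆)) ∨
        (∃ i j : Fin (n-1), (j : ℕ) = (i : ℕ) + 1 ∧
          w = fr i * fr j * fs i * (fs j * fr i * fr j)⁻¹) }

/-- The virtual twin group `VT_n`. -/
abbrev VT (n : ℕ) := PresentedGroup (vtRels n)

/-- The generator `s_{k+1}` (1-based numbering) of `VT_n`. -/
def sg {n : ℕ} (k : ℕ) (h : k < n - 1) : VT n := PresentedGroup.of (Sum.inl ⟨k, h⟩)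

/-- The generator `ρ_{k+1}` (1-based numbering) of `VT_n`. -/
def rg {n : ℕ} (k : ℕ) (h : k < n - 1) : VT n := PresentedGroup.of (Sum.inr ⟨k, h⟩)

/-- The transposition `(i, i+1)` in the symmetric group on `n` letters. -/
def tr {n : ℕ} (i : Fin (n - 1)) : Equiv.Perm (Fin n) :=
  Equiv.swap ⟨i.1, by have := i.2; omega⟩ ⟨i.1 + 1, by have := i.2; omega⟩

lemma swap_commute {α : Type*} [DecidableEq α] {a b c d : α}
    (h1 : a ≠ c) (h2 : a ≠ d) (h3 : b ≠ c) (h4 : b ≠ d) :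
    Commute (Equiv.swap a b) (Equiv.swap c d) := by
  apply Equiv.Perm.Disjoint.commute
  intro x
  by_cases hxa : x = a
  · subst hxa; right; exact Equiv.swap_apply_of_ne_of_ne h1 h2
  · by_cases hxb : x = b
    · subst hxb; right; exact Equiv.swap_apply_of_ne_of_ne h3 h4
    · left; exact Equiv.swap_apply_of_ne_of_ne hxa hxb

lemma tr_commute {n : ℕ} {i j : Fin (n-1)} (h : (i : ℕ) + 2 ≤ (j : ℕ)) :
    Commute (tr (n := n) i) (tr j) := by
  apply swap_commute <;>
    (intro hEq; apply_fun Fin.val at hEq; simp only [] at hEq; omega)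

lemma tr_braid {n : ℕ} {i j : Fin (n-1)} (h : (j : ℕ) = (i : ℕ) + 1) :
    tr (n := n) i * tr j * tr i = tr j * tr i * tr j := by
  have hj2 : (i : ℕ) + 2 ≤ n := by have := j.2; omega
  set a : Fin n := ⟨i.1, by omega⟩ with ha
  set b : Fin n := ⟨i.1 + 1, by omega⟩ with hb
  set c : Fin n := ⟨i.1 + 2, by omega⟩ with hc
  have hab : a ≠ b := by simp [ha, hb, Fin.ext_iff]
  have hbc : b ≠ c := by simp [hb, hc, Fin.ext_iff]
  have hac : a ≠ c := by simp [ha, hc, Fin.ext_iff]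
  have h1 : tr (n := n) i = Equiv.swap a b := rfl
  have h2 : tr (n := n) j = Equiv.swap b c := by
    unfold tr
    congr 1 <;> exact Fin.ext (by simp [hb, hc, h])
  rw [h1, h2]
  have L := Equiv.swap_mul_swap_mul_swap (x := c) (y := b) (z := a)
    (hbc.symm) (hac.symm)
  have R := Equiv.swap_mul_swap_mul_swap (x := a) (y := b) (z := c)
    (hab) (hac)
  calc Equiv.swap a b * Equiv.swap b c * Equiv.swap a b
      = Equiv.swap b a * Equiv.swap c b * Equiv.swap b a := by
        rw [Equiv.swap_comm a b, Equiv.swap_comm b c]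
    _ = Equiv.swap a c := L
    _ = Equiv.swap c a := Equiv.swap_comm a c
    _ = Equiv.swap b c * Equiv.swap a b * Equiv.swap b c := R.symm

lemma tr_sq {n : ℕ} (i : Fin (n-1)) : tr (n := n) i * tr i = 1 := Equiv.swap_mul_self _ _

/-- The canonical projection `π : VT_n → S_n`. -/
def perm (n : ℕ) : VT n →* Equiv.Perm (Fin n) :=
  PresentedGroup.toGroup (f := Sum.elim tr tr) (by
    rintro w (⟨i, rfl⟩ | ⟨i, j, hij, rfl⟩ | ⟨i, rfl⟩ | ⟨i, j, hij, rfl⟩ |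
      ⟨i, j, hij, rfl⟩ | ⟨i, j, hij, (rfl | rfl)⟩ | ⟨i, j, hij, rfl⟩)
    · simp [fs, tr_sq]
    · rw [map_commutatorElement]
      simp only [fs, FreeGroup.lift_apply_of, Sum.elim_inl]
      exact commutatorElement_eq_one_iff_commute.mpr (tr_commute hij)
    · simp [fr, tr_sq]
    · rw [map_commutatorElement]
      simp only [fr, FreeGroup.lift_apply_of, Sum.elim_inr]
      exact commutatorElement_eq_one_iff_commute.mpr (tr_commute hij)
    · have h1 : FreeGroup.lift (Sum.elim tr tr) (fr i * fr j * fr (n := n) i)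
          = tr i * tr j * tr i := by simp [fr]
      have h2 : FreeGroup.lift (Sum.elim tr tr) (fr j * fr i * fr (n := n) j)
          = tr j * tr i * tr j := by simp [fr]
      rw [map_mul, map_inv, h1, h2, tr_braid hij, mul_inv_cancel]
    · rw [map_commutatorElement]
      simp only [fr, fs, FreeGroup.lift_apply_of, Sum.elim_inl, Sum.elim_inr]
      exact commutatorElement_eq_one_iff_commute.mpr (tr_commute hij)
    · rw [map_commutatorElement]
      simp only [fr, fs, FreeGroup.lift_apply_of, Sum.elim_inl, Sum.elim_inr]
      exact commutatorElement_eq_one_iff_commute.mpr (tr_commute hij)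
    · have h1 : FreeGroup.lift (Sum.elim tr tr) (fr i * fr j * fs (n := n) i)
          = tr i * tr j * tr i := by simp [fr, fs]
      have h2 : FreeGroup.lift (Sum.elim tr tr) (fs j * fr i * fr (n := n) j)
          = tr j * tr i * tr j := by simp [fr, fs]
      rw [map_mul, map_inv, h1, h2, tr_braid hij, mul_inv_cancel])


/-- Vertices `λ_{i,j}`, `1 ≤ i < j ≤ n`, indexed by pairs of `Fin n`. -/
abbrev Vtx (n : ℕ) := {p : Fin n × Fin n // p.1 < p.2}

/-- Two vertices `λ_{i,j}` and `λ_{k,l}` have disjoint index sets, i.e. `i,j,k,l` are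
four distinct integers. -/
abbrev DisjV {n : ℕ} (p q : Vtx n) : Prop :=
  p.1.1 ≠ q.1.1 ∧ p.1.1 ≠ q.1.2 ∧ p.1.2 ≠ q.1.1 ∧ p.1.2 ≠ q.1.2

/-- The right-angled Artin relations for `PVT_n`: the generators `λ_{i,j}` and `λ_{k,l}`
commute whenever `i, j, k, l` are four distinct integers. -/
def raagRels (n : ℕ) : Set (FreeGroup (Vtx n)) :=
  { w | ∃ p q : Vtx n, DisjV p q ∧ w = ⁅FreeGroup.of p, FreeGroup.of q⁆ }

/-- The element `λ_{a+1,b+1} = ρ_{b}⋯ρ_{a+2}(s_{a+1}ρ_{a+1})ρ_{a+2}⋯ρ_{b}` of `VT n`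
(paper indices are 1-based; here `a,b` are 0-based strand indices with `a < b < n`). -/
def lamN {n : ℕ} : ℕ → ℕ → VT n
  | a, b =>
    if h : a < b ∧ b < n then
      if hb : b = a + 1 then sg a (by omega) * rg a (by omega)
      else rg (b - 1) (by omega) * lamN a (b - 1) * rg (b - 1) (by omega)
    else 1
  termination_by a b => b
  decreasing_by omega

/-- The generator `λ_{i,j}` of `PVT_n`, as an element of `VT n`. -/
def lam {n : ℕ} (p : Vtx n) : VT n := lamN p.1.1.1 p.1.2.1


section AuxLemmas
variable {n : ℕ}

lemma rel_one {r : FreeGroup (Gen n)} (h : r ∈ vtRels n) :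
    PresentedGroup.mk (vtRels n) r = 1 := by
  exact (QuotientGroup.eq_one_iff r).mpr (Subgroup.subset_normalClosure h)

lemma mk_fs (i : Fin (n-1)) : PresentedGroup.mk (vtRels n) (fs i) = sg i.1 i.2 := rfl
lemma mk_fr (i : Fin (n-1)) : PresentedGroup.mk (vtRels n) (fr i) = rg i.1 i.2 := rfl

lemma sg_mul_self (k : ℕ) (h : k < n-1) : sg (n := n) k h * sg k h = 1 := by
  have := rel_one (n := n) (r := fs ⟨k,h⟩ * fs ⟨k,h⟩) (Or.inl ⟨⟨k,h⟩, rfl⟩)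
  simpa [map_mul, mk_fs] using this

lemma rg_mul_self (k : ℕ) (h : k < n-1) : rg (n := n) k h * rg k h = 1 := by
  have := rel_one (n := n) (r := fr ⟨k,h⟩ * fr ⟨k,h⟩)
    (Or.inr (Or.inr (Or.inl ⟨⟨k,h⟩, rfl⟩)))
  simpa [map_mul, mk_fr] using this

lemma sg_inv (k : ℕ) (h : k < n-1) : (sg (n := n) k h)⁻¹ = sg k h :=
  inv_eq_of_mul_eq_one_right (sg_mul_self k h)
lemma rg_inv (k : ℕ) (h : k < n-1) : (rg (n := n) k h)⁻¹ = rg k h :=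
  inv_eq_of_mul_eq_one_right (rg_mul_self k h)

lemma comm_ss {k l : ℕ} (hk : k < n-1) (hl : l < n-1) (hkl : k + 2 ≤ l) :
    Commute (sg (n := n) k hk) (sg l hl) := by
  have := rel_one (n := n) (r := ⁅fs ⟨k,hk⟩, fs ⟨l,hl⟩⁆)
    (Or.inr (Or.inl ⟨⟨k,hk⟩, ⟨l,hl⟩, hkl, rfl⟩))
  rw [map_commutatorElement] at this
  exact commutatorElement_eq_one_iff_commute.mp this

lemma comm_rr {k l : ℕ} (hk : k < n-1) (hl : l < n-1) (hkl : k + 2 ≤ l) :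
    Commute (rg (n := n) k hk) (rg l hl) := by
  have := rel_one (n := n) (r := ⁅fr ⟨k,hk⟩, fr ⟨l,hl⟩⁆)
    (Or.inr (Or.inr (Or.inr (Or.inl ⟨⟨k,hk⟩, ⟨l,hl⟩, hkl, rfl⟩))))
  rw [map_commutatorElement] at this
  exact commutatorElement_eq_one_iff_commute.mp this

lemma comm_rs {k l : ℕ} (hk : k < n-1) (hl : l < n-1) (hkl : k + 2 ≤ l) :
    Commute (rg (n := n) k hk) (sg l hl) := by
  have := rel_one (n := n) (r := ⁅fr ⟨k,hk⟩, fs ⟨l,hl⟩⁆)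
    (Or.inr (Or.inr (Or.inr (Or.inr (Or.inr (Or.inl ⟨⟨k,hk⟩, ⟨l,hl⟩, hkl, Or.inl rfl⟩))))))
  rw [map_commutatorElement] at this
  exact commutatorElement_eq_one_iff_commute.mp this

lemma comm_sr {k l : ℕ} (hk : k < n-1) (hl : l < n-1) (hkl : k + 2 ≤ l) :
    Commute (sg (n := n) k hk) (rg l hl) := by
  have := rel_one (n := n) (r := ⁅fs ⟨k,hk⟩, fr ⟨l,hl⟩⁆)
    (Or.inr (Or.inr (Or.inr (Or.inr (Or.inr (Or.inl ⟨⟨k,hk⟩, ⟨l,hl⟩, hkl, Or.inr rfl⟩))))))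
  rw [map_commutatorElement] at this
  exact commutatorElement_eq_one_iff_commute.mp this

lemma braid_rrr {k : ℕ} (hk : k < n-1) (hk1 : k+1 < n-1) :
    rg (n := n) k hk * rg (k+1) hk1 * rg k hk = rg (k+1) hk1 * rg k hk * rg (k+1) hk1 := by
  have := rel_one (n := n)
    (r := fr ⟨k,hk⟩ * fr ⟨k+1,hk1⟩ * fr ⟨k,hk⟩ * (fr ⟨k+1,hk1⟩ * fr ⟨k,hk⟩ * fr ⟨k+1,hk1⟩)⁻¹)
    (Or.inr (Or.inr (Or.inr (Or.inr (Or.inl ⟨⟨k,hk⟩, ⟨k+1,hk1⟩, rfl, rfl⟩)))))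
  rw [map_mul, map_inv, mul_inv_eq_one] at this
  simpa only [map_mul, mk_fr] using this

lemma braid_rrs {k : ℕ} (hk : k < n-1) (hk1 : k+1 < n-1) :
    rg (n := n) k hk * rg (k+1) hk1 * sg k hk = sg (k+1) hk1 * rg k hk * rg (k+1) hk1 := by
  have := rel_one (n := n)
    (r := fr ⟨k,hk⟩ * fr ⟨k+1,hk1⟩ * fs ⟨k,hk⟩ * (fs ⟨k+1,hk1⟩ * fr ⟨k,hk⟩ * fr ⟨k+1,hk1⟩)⁻¹)
    (Or.inr (Or.inr (Or.inr (Or.inr (Or.inr (Or.inr ⟨⟨k,hk⟩, ⟨k+1,hk1⟩, rfl, rfl⟩))))))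
  rw [map_mul, map_inv, mul_inv_eq_one] at this
  simpa only [map_mul, mk_fr, mk_fs] using this


lemma lamN_base {a : ℕ} (h : a + 1 < n) :
    lamN (n:=n) a (a+1) = sg a (by omega) * rg a (by omega) := by
  rw [lamN]
  simp [show a < a + 1 ∧ a + 1 < n from ⟨by omega, h⟩]

lemma lamN_step {a b : ℕ} (h1 : a + 1 < b) (h2 : b < n) :
    lamN (n:=n) a b = rg (b-1) (by omega) * lamN a (b-1) * rg (b-1) (by omega) := by
  rw [lamN]
  have : a < b ∧ b < n := ⟨by omega, h2⟩
  simp [this, show ¬ b = a + 1 by omega]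

lemma lamN_step' {a b : ℕ} (h1 : a + 1 < b + 1) (h2 : b + 1 < n) :
    lamN (n:=n) a (b+1) = rg b (by omega) * lamN a b * rg b (by omega) := by
  rw [lamN_step h1 h2]
  simp only [Nat.add_sub_cancel]

lemma comm_sandwich {x y : VT n} (h : Commute x y) (hx : x * x = 1) : x * y * x = y := by
  rw [h.eq, mul_assoc, hx, mul_one]

lemma sandwich_comm {x y L : VT n} (h : Commute x y) :
    x * (y * L * y) * x = y * (x * L * x) * y := by
  calc x * (y * L * y) * x = (x*y) * L * (y*x) := by group
    _ = (y*x) * L * (x*y) := by rw [h.eq, h.symm.eq]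
    _ = y * (x * L * x) * y := by group

lemma comm_low {k a : ℕ} (hk : k < n-1) (hka : k + 2 ≤ a) :
    ∀ b, a < b → b < n → Commute (rg (n:=n) k hk) (lamN a b) := by
  intro b
  induction b using Nat.strong_induction_on with
  | _ b ih =>
    intro hab hbn
    by_cases hb : b = a + 1
    · subst hb
      rw [lamN_base (by omega)]
      exact ((comm_rs hk (by omega) hka).mul_right (comm_rr hk (by omega) hka))
    · rw [lamN_step (by omega) hbn]
      exact ((comm_rr hk (by omega) (by omega)).mul_right
        (ih (b-1) (by omega) (by omega) (by omega))).mul_right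
        (comm_rr hk (by omega) (by omega))

lemma comm_high {k a : ℕ} (hk : k < n-1) :
    ∀ b, a < b → b < n → b + 1 ≤ k → Commute (rg (n:=n) k hk) (lamN a b) := by
  intro b
  induction b using Nat.strong_induction_on with
  | _ b ih =>
    intro hab hbn hbk
    by_cases hb : b = a + 1
    · subst hb
      rw [lamN_base (by omega)]
      exact ((comm_sr (by omega) hk (by omega)).symm.mul_right
        (comm_rr (by omega) hk (by omega)).symm)
    · rw [lamN_step (by omega) hbn]
      exact (((comm_rr (by omega) hk (by omega)).symm.mul_right
        (ih (b-1) (by omega) (by omega) (by omega) (by omega))).mul_right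
        (comm_rr (by omega) hk (by omega)).symm)

/-- `ρ_a λ_{a+1,b} ρ_a = λ_{a,b}`. -/
lemma shift_left {a : ℕ} (ha : a < n-1) :
    ∀ b, a + 1 < b → b < n → rg (n:=n) a ha * lamN (a+1) b * rg a ha = lamN a b := by
  intro b
  induction b using Nat.strong_induction_on with
  | _ b ih =>
    intro hab hbn
    by_cases hb : b = a + 2
    · subst hb
      have ha1 : a + 1 < n - 1 := by omega
      have e1 : lamN (n:=n) (a+1) (a+2) = sg (a+1) ha1 * rg (a+1) ha1 :=
        lamN_base (by omega)
      have e2 : lamN (n:=n) a (a+2) = rg (a+1) ha1 * lamN a (a+1) * rg (a+1) ha1 :=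
        lamN_step' (by omega) (by omega)
      have e3 : lamN (n:=n) a (a+1) = sg a ha * rg a ha := lamN_base (by omega)
      rw [e1, e2, e3]
      have hs : sg (a+1) ha1
          = rg a ha * rg (a+1) ha1 * sg a ha * rg (a+1) ha1 * rg a ha := by
        rw [braid_rrs ha ha1]
        rw [mul_assoc (sg (a+1) ha1 * rg a ha), rg_mul_self, mul_one,
          mul_assoc, rg_mul_self, mul_one]
      calc rg a ha * (sg (a+1) ha1 * rg (a+1) ha1) * rg a ha
          = rg a ha * ((rg a ha * rg (a+1) ha1 * sg a ha * rg (a+1) ha1 * rg a ha)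
              * rg (a+1) ha1) * rg a ha := by rw [← hs]
        _ = (rg a ha * rg a ha) * rg (a+1) ha1 * sg a ha *
              ((rg (a+1) ha1 * rg a ha * rg (a+1) ha1) * rg a ha) := by group
        _ = rg (a+1) ha1 * sg a ha * ((rg a ha * rg (a+1) ha1 * rg a ha) * rg a ha) := by
              rw [rg_mul_self, one_mul, ← braid_rrr ha ha1]
        _ = rg (a+1) ha1 * (sg a ha * rg a ha) * (rg (a+1) ha1 * (rg a ha * rg a ha)) := by
              group
        _ = rg (a+1) ha1 * (sg a ha * rg a ha) * rg (a+1) ha1 := by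
              rw [rg_mul_self, mul_one]
    · have hb3 : a + 3 ≤ b := by omega
      rw [lamN_step (by omega) hbn, lamN_step (by omega) hbn]
      have hcomm : Commute (rg (n:=n) a ha) (rg (b-1) (by omega)) :=
        comm_rr ha (by omega) (by omega)
      rw [sandwich_comm hcomm, ih (b-1) (by omega) (by omega) (by omega)]

/-- `ρ_a λ_{a,b} ρ_a = λ_{a+1,b}` for `b ≥ a+2`. -/
lemma shift_right {a : ℕ} (ha : a < n-1) :
    ∀ b, a + 1 < b → b < n → rg (n:=n) a ha * lamN a b * rg a ha = lamN (a+1) b := by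
  intro b
  induction b using Nat.strong_induction_on with
  | _ b ih =>
    intro hab hbn
    by_cases hb : b = a + 2
    · subst hb
      have ha1 : a + 1 < n - 1 := by omega
      have e1 : lamN (n:=n) (a+1) (a+2) = sg (a+1) ha1 * rg (a+1) ha1 :=
        lamN_base (by omega)
      have e2 : lamN (n:=n) a (a+2) = rg (a+1) ha1 * lamN a (a+1) * rg (a+1) ha1 :=
        lamN_step' (by omega) (by omega)
      have e3 : lamN (n:=n) a (a+1) = sg a ha * rg a ha := lamN_base (by omega)
      rw [e1, e2, e3]
      calc rg a ha * (rg (a+1) ha1 * (sg a ha * rg a ha) * rg (a+1) ha1) * rg a ha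
          = (rg a ha * rg (a+1) ha1 * sg a ha) * (rg a ha * rg (a+1) ha1 * rg a ha) := by
            group
        _ = (sg (a+1) ha1 * rg a ha * rg (a+1) ha1) * (rg (a+1) ha1 * rg a ha * rg (a+1) ha1)
            := by rw [braid_rrs ha ha1, braid_rrr ha ha1]
        _ = sg (a+1) ha1 * rg a ha * (rg (a+1) ha1 * rg (a+1) ha1) * (rg a ha * rg (a+1) ha1)
            := by group
        _ = sg (a+1) ha1 * (rg a ha * rg a ha) * rg (a+1) ha1 := by
            rw [rg_mul_self, mul_one]; group
        _ = sg (a+1) ha1 * rg (a+1) ha1 := by rw [rg_mul_self, mul_one]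
    · rw [lamN_step (by omega) hbn, lamN_step (by omega) hbn]
      have hcomm : Commute (rg (n:=n) a ha) (rg (b-1) (by omega)) :=
        comm_rr ha (by omega) (by omega)
      rw [sandwich_comm hcomm, ih (b-1) (by omega) (by omega) (by omega)]

/-- `ρ_k` commutes with `λ_{a,b}` for `a < k`, `k+1 < b`. -/
lemma inner_comm {k a : ℕ} (hk : k < n-1) (hak : a + 1 ≤ k) :
    ∀ b, k + 2 ≤ b → b < n → rg (n:=n) k hk * lamN a b * rg k hk = lamN a b := by
  intro b
  induction b using Nat.strong_induction_on with
  | _ b ih =>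
    intro hkb hbn
    by_cases hb : b = k + 2
    · subst hb
      have hk1 : k + 1 < n - 1 := by omega
      have e1 : lamN (n:=n) a (k+2) = rg (k+1) hk1 * lamN a (k+1) * rg (k+1) hk1 :=
        lamN_step' (by omega) (by omega)
      have e2 : lamN (n:=n) a (k+1) = rg k hk * lamN a k * rg k hk :=
        lamN_step' (by omega) (by omega)
      have hL : Commute (rg (n:=n) (k+1) hk1) (lamN a k) :=
        comm_high hk1 k (by omega) (by omega) (by omega)
      rw [e1, e2]
      calc rg k hk * (rg (k+1) hk1 * (rg k hk * lamN a k * rg k hk) * rg (k+1) hk1) * rg k hk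
          = (rg k hk * rg (k+1) hk1 * rg k hk) * lamN a k *
              (rg k hk * rg (k+1) hk1 * rg k hk) := by group
        _ = (rg (k+1) hk1 * rg k hk * rg (k+1) hk1) * lamN a k *
              (rg (k+1) hk1 * rg k hk * rg (k+1) hk1) := by rw [braid_rrr hk hk1]
        _ = rg (k+1) hk1 * rg k hk * (rg (k+1) hk1 * lamN a k * rg (k+1) hk1)
              * rg k hk * rg (k+1) hk1 := by group
        _ = rg (k+1) hk1 * (rg k hk * lamN a k * rg k hk) * rg (k+1) hk1 := by
              rw [comm_sandwich hL (rg_mul_self _ _)]; group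
    · rw [lamN_step (by omega) hbn]
      have hcomm : Commute (rg (n:=n) k hk) (rg (b-1) (by omega)) :=
        comm_rr hk (by omega) (by omega)
      rw [sandwich_comm hcomm, ih (b-1) (by omega) (by omega) (by omega)]


def KK (n : ℕ) : Subgroup (VT n) := Subgroup.closure (Set.range (lam (n := n)))

lemma lamN_mem {a b : ℕ} (hab : a < b) (hbn : b < n) : lamN (n:=n) a b ∈ KK n :=
  Subgroup.subset_closure ⟨⟨(⟨a, by omega⟩, ⟨b, hbn⟩), hab⟩, rfl⟩

lemma conj_rg_lam_mem {k a b : ℕ} (hk : k < n-1) (hab : a < b) (hbn : b < n) :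
    rg (n:=n) k hk * lamN a b * rg k hk ∈ KK n := by
  by_cases h1 : k + 2 ≤ a
  · rw [comm_sandwich (comm_low hk h1 b hab hbn) (rg_mul_self _ _)]
    exact lamN_mem hab hbn
  by_cases h2 : k + 1 = a
  · subst h2
    rw [shift_left hk b (by omega) hbn]
    exact lamN_mem (by omega) hbn
  by_cases h3 : k = a ∧ b = a + 1
  · rcases h3 with ⟨rfl, rfl⟩
    rw [lamN_base (by omega)]
    have : rg (n:=n) k hk * (sg k (by omega) * rg k (by omega)) * rg k hk
        = (sg k hk * rg k hk)⁻¹ := by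
      rw [mul_inv_rev, sg_inv, rg_inv]
      calc rg (n:=n) k hk * (sg k (by omega) * rg k (by omega)) * rg k hk
          = rg k hk * sg k hk * (rg k hk * rg k hk) := by group
        _ = rg k hk * sg k hk := by rw [rg_mul_self, mul_one]
    rw [this]
    refine inv_mem ?_
    rw [← lamN_base (by omega)]
    exact lamN_mem (by omega) (by omega)
  by_cases h4 : k = a
  · subst h4
    rw [shift_right hk b (by omega) hbn]
    exact lamN_mem (by omega) hbn
  -- now a + 1 ≤ k
  by_cases h5 : k + 2 ≤ b
  · rw [inner_comm hk (by omega) b h5 hbn]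
    exact lamN_mem hab hbn
  by_cases h6 : k + 1 = b
  · subst h6
    rw [lamN_step' (by omega) hbn]
    have : rg (n:=n) k hk * (rg k (by omega) * lamN a k * rg k (by omega)) * rg k hk
        = lamN a k := by
      calc rg (n:=n) k hk * (rg k (by omega) * lamN a k * rg k (by omega)) * rg k hk
          = (rg k hk * rg k hk) * lamN a k * (rg k hk * rg k hk) := by group
        _ = lamN a k := by rw [rg_mul_self, one_mul, mul_one]
    rw [this]
    exact lamN_mem (by omega) (by omega)
  by_cases h7 : k = b
  · subst h7
    rw [← lamN_step' (by omega) (by omega)]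
    exact lamN_mem (by omega) (by omega)
  · rw [comm_sandwich (comm_high hk b hab hbn (by omega)) (rg_mul_self _ _)]
    exact lamN_mem hab hbn

lemma lam_eq (p : Vtx n) : lam p = lamN p.1.1.1 p.1.2.1 := rfl

lemma conj_K {g : VT n} (hg : ∀ p : Vtx n, g * lam p * g⁻¹ ∈ KK n) :
    ∀ x ∈ KK n, g * x * g⁻¹ ∈ KK n := by
  intro x hx
  refine Subgroup.closure_induction ?_ ?_ ?_ ?_ hx
  · rintro y ⟨p, rfl⟩; exact hg p
  · simpa using one_mem (KK n)
  · intro y z _ _ hy hz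
    have : g * (y * z) * g⁻¹ = (g * y * g⁻¹) * (g * z * g⁻¹) := by group
    rw [this]; exact mul_mem hy hz
  · intro y _ hy
    have : g * y⁻¹ * g⁻¹ = (g * y * g⁻¹)⁻¹ := by group
    rw [this]; exact inv_mem hy

def conjStab (n : ℕ) : Subgroup (VT n) where
  carrier := {g | ∀ x, x ∈ KK n ↔ g * x * g⁻¹ ∈ KK n}
  one_mem' := by intro x; simp
  mul_mem' := by
    intro a b ha hb x
    rw [hb x, ha (b * x * b⁻¹)]
    constructor <;> intro h
    · have : a * b * x * (a * b)⁻¹ = a * (b * x * b⁻¹) * a⁻¹ := by group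
      rw [this]; exact h
    · have : a * (b * x * b⁻¹) * a⁻¹ = a * b * x * (a * b)⁻¹ := by group
      rw [this]; exact h
  inv_mem' := by
    intro a ha x
    have e : a * (a⁻¹ * x * a⁻¹⁻¹) * a⁻¹ = x := by group
    have h2 := ha (a⁻¹ * x * a⁻¹⁻¹)
    rw [e] at h2
    exact h2.symm


lemma rg_mem_conjStab {k : ℕ} (hk : k < n-1) : rg (n:=n) k hk ∈ conjStab n := by
  intro x
  have fwd : ∀ y ∈ KK n, rg (n:=n) k hk * y * (rg k hk)⁻¹ ∈ KK n := by
    refine conj_K ?_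
    intro p
    rw [rg_inv]
    have hab : (p.1.1 : ℕ) < (p.1.2 : ℕ) := p.2
    exact conj_rg_lam_mem hk hab p.1.2.2
  constructor
  · intro h; exact fwd x h
  · intro h
    have := fwd _ h
    have e : rg (n:=n) k hk * (rg k hk * x * (rg k hk)⁻¹) * (rg k hk)⁻¹ = x := by
      rw [rg_inv]
      calc rg (n:=n) k hk * (rg k hk * x * rg k hk) * rg k hk
          = (rg k hk * rg k hk) * x * (rg k hk * rg k hk) := by group
        _ = x := by rw [rg_mul_self, one_mul, mul_one]
    rwa [e] at this

lemma sg_eq_lam_mul_rg {k : ℕ} (hk : k < n-1) :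
    sg (n:=n) k hk = lamN k (k+1) * rg k hk := by
  rw [lamN_base (by omega)]
  calc sg (n:=n) k hk = sg k hk * (rg k hk * rg k hk) := by rw [rg_mul_self, mul_one]
    _ = sg k hk * rg k hk * rg k hk := by group

lemma sg_mem_conjStab {k : ℕ} (hk : k < n-1) : sg (n:=n) k hk ∈ conjStab n := by
  have h1 : lamN (n:=n) k (k+1) ∈ KK n := lamN_mem (by omega) (by omega)
  have h2 : (lamN (n:=n) k (k+1)) ∈ conjStab n := by
    intro x
    constructor
    · intro hx
      exact mul_mem (mul_mem h1 hx) (inv_mem h1)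
    · intro hx
      have : x = (lamN (n:=n) k (k+1))⁻¹ * (lamN k (k+1) * x * (lamN k (k+1))⁻¹)
          * (lamN k (k+1))⁻¹⁻¹ := by group
      rw [this]
      exact mul_mem (mul_mem (inv_mem h1) hx) (inv_mem (inv_mem h1))
  have : sg (n:=n) k hk = lamN k (k+1) * rg k hk := sg_eq_lam_mul_rg hk
  rw [this]
  exact mul_mem h2 (rg_mem_conjStab hk)

lemma K_normal : ∀ g : VT n, ∀ x ∈ KK n, g * x * g⁻¹ ∈ KK n := by
  intro g x hx
  have hg : g ∈ conjStab n := by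
    refine PresentedGroup.generated_by _ _ ?_ g
    rintro (i | i)
    · exact sg_mem_conjStab i.2
    · exact rg_mem_conjStab i.2
  exact (hg x).mp hx


lemma perm_rg {k : ℕ} (hk : k < n-1) : perm n (rg k hk) = tr ⟨k, hk⟩ := by
  unfold perm rg
  rw [PresentedGroup.toGroup.of]
  rfl

lemma perm_sg {k : ℕ} (hk : k < n-1) : perm n (sg k hk) = tr ⟨k, hk⟩ := by
  unfold perm sg
  rw [PresentedGroup.toGroup.of]
  rfl

lemma tr_apply (i : Fin (n-1)) (x : Fin n) :
    tr i x = if x.1 = i.1 then ⟨i.1+1, by have := i.2; omega⟩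
      else if x.1 = i.1+1 then ⟨i.1, by have := i.2; omega⟩ else x := by
  unfold tr
  split_ifs with h1 h2
  · have : x = ⟨i.1, by have := i.2; omega⟩ := Fin.ext h1
    rw [this, Equiv.swap_apply_left]
  · have : x = ⟨i.1+1, by have := i.2; omega⟩ := Fin.ext h2
    rw [this, Equiv.swap_apply_right]
  · exact Equiv.swap_apply_of_ne_of_ne
      (fun he => h1 (Fin.ext_iff.mp he)) (fun he => h2 (Fin.ext_iff.mp he))

lemma tr_involutive (i : Fin (n-1)) : ∀ x : Fin n, tr i (tr i x) = x := by
  intro x; unfold tr; exact Equiv.swap_apply_self _ _ _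

lemma tr_inv (i : Fin (n-1)) : (tr (n:=n) i)⁻¹ = tr i := by
  unfold tr; exact Equiv.swap_inv _ _

lemma perm_lamN_eq_one {a : ℕ} : ∀ b, a < b → b < n → perm n (lamN a b) = 1 := by
  intro b
  induction b using Nat.strong_induction_on with
  | _ b ih =>
    intro hab hbn
    by_cases hb : b = a + 1
    · subst hb
      rw [lamN_base (by omega), map_mul, perm_sg, perm_rg, tr_sq]
    · rw [lamN_step (by omega) hbn, map_mul, map_mul, perm_rg,
        ih (b-1) (by omega) (by omega) (by omega), mul_one, tr_sq]

def Erun {n : ℕ} : ℕ → ℕ → VT n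
  | j, m =>
    if h : j < m ∧ m ≤ n - 1 then rg j (by omega) * Erun (j+1) m else 1
  termination_by j m => m - j
  decreasing_by omega

lemma Erun_stop {j m : ℕ} (h : ¬ (j < m ∧ m ≤ n-1)) : Erun (n:=n) j m = 1 := by
  rw [Erun]; simp [h]

lemma Erun_step {j m : ℕ} (h1 : j < m) (h2 : m ≤ n-1) :
    Erun (n:=n) j m = rg j (by omega) * Erun (j+1) m := by
  rw [Erun]; simp [h1, h2]

lemma perm_Erun_lt {m : ℕ} :
    ∀ d j, m - j ≤ d → ∀ x : Fin n, x.1 < j → perm n (Erun j m) x = x := by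
  intro d
  induction d with
  | zero =>
    intro j hd x _
    rw [Erun_stop (by omega), map_one, Equiv.Perm.one_apply]
  | succ d ih =>
    intro j hd x hx
    by_cases h : j < m ∧ m ≤ n - 1
    · rw [Erun_step h.1 h.2, map_mul, perm_rg, Equiv.Perm.mul_apply,
        ih (j+1) (by omega) x (by omega), tr_apply]
      have h1 : ¬ x.1 = j := by omega
      have h2 : ¬ x.1 = j + 1 := by omega
      simp [h1, h2]
    · rw [Erun_stop h, map_one, Equiv.Perm.one_apply]

lemma perm_Erun_gt {m : ℕ} :
    ∀ d j, m - j ≤ d → ∀ x : Fin n, m < x.1 → perm n (Erun j m) x = x := by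
  intro d
  induction d with
  | zero =>
    intro j hd x _
    rw [Erun_stop (by omega), map_one, Equiv.Perm.one_apply]
  | succ d ih =>
    intro j hd x hx
    by_cases h : j < m ∧ m ≤ n - 1
    · rw [Erun_step h.1 h.2, map_mul, Equiv.Perm.mul_apply,
        ih (j+1) (by omega) x (by omega), perm_rg, tr_apply]
      have h1 : ¬ x.1 = j := by omega
      have h2 : ¬ x.1 = j + 1 := by omega
      simp [h1, h2]
    · rw [Erun_stop h, map_one, Equiv.Perm.one_apply]

lemma perm_Erun_top {m : ℕ} (hm : m ≤ n-1) (hmn : m < n) :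
    ∀ d j (_ : m - j ≤ d) (hj : j ≤ m), perm n (Erun j m) ⟨m, hmn⟩ = ⟨j, by omega⟩ := by
  intro d
  induction d with
  | zero =>
    intro j hd hj
    have : j = m := by omega
    subst this
    rw [Erun_stop (by omega), map_one, Equiv.Perm.one_apply]
  | succ d ih =>
    intro j hd hj
    by_cases hjm : j = m
    · subst hjm
      rw [Erun_stop (by omega), map_one, Equiv.Perm.one_apply]
    · rw [Erun_step (by omega) hm, map_mul, Equiv.Perm.mul_apply,
        ih (j+1) (by omega) (by omega), perm_rg, tr_apply]
      simp only []
      have h1 : ¬ j + 1 = j := by omega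
      simp [h1]
  
lemma perm_Erun_mid {m : ℕ} (hm : m ≤ n-1) :
    ∀ d j (_ : m - j ≤ d), ∀ x : Fin n, j ≤ x.1 → ∀ (hxm : x.1 < m),
      perm n (Erun j m) x = ⟨x.1 + 1, by omega⟩ := by
  intro d
  induction d with
  | zero => intro j hd x h1 h2; omega
  | succ d ih =>
    intro j hd x hjx hxm
    rw [Erun_step (by omega) hm, map_mul, Equiv.Perm.mul_apply]
    by_cases hxj : x.1 = j
    · rw [perm_Erun_lt d (j+1) (by omega) x (by omega), perm_rg, tr_apply]
      simp [hxj]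
    · rw [ih (j+1) (by omega) x (by omega) hxm, perm_rg, tr_apply]
      have h1 : ¬ x.1 + 1 = j := by omega
      have h2 : ¬ x.1 + 1 = j + 1 := by omega
      simp [h1, h2, hxj]


lemma comm_Erun {k j₀ m : ℕ} (hk : k < n-1) :
    ∀ d j, m - j ≤ d → k + 2 ≤ j → Commute (rg (n:=n) k hk) (Erun j m) := by
  intro d
  induction d with
  | zero =>
    intro j hd hkj
    rw [Erun_stop (by omega)]
    exact Commute.one_right _
  | succ d ih =>
    intro j hd hkj
    by_cases h : j < m ∧ m ≤ n - 1
    · rw [Erun_step h.1 h.2]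
      exact (comm_rr hk (by omega) hkj).mul_right (ih (j+1) (by omega) (by omega))
    · rw [Erun_stop h]
      exact Commute.one_right _

lemma rg_mul_Erun {m : ℕ} {l : ℕ} (hl : l < n-1) (hl1 : l+1 < n-1) :
    ∀ d j, m - j ≤ d → j ≤ l → l + 1 < m → m ≤ n-1 →
      rg (l+1) hl1 * Erun (n:=n) j m = Erun j m * rg l hl := by
  intro d
  induction d with
  | zero => intro j hd hjl hlm hmn; omega
  | succ d ih =>
    intro j hd hjl hlm hmn
    by_cases hcase : j = l
    · subst hcase
      rw [Erun_step (by omega) hmn, Erun_step (by omega) hmn]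
      have hE : Commute (rg (n:=n) j hl) (Erun (j+2) m) :=
        comm_Erun (j₀ := 0) hl m (j+2) (by omega) (by omega)
      have hbr : rg (n:=n) j hl * rg (j+1) hl1 * rg j hl
          = rg (j+1) hl1 * rg j hl * rg (j+1) hl1 := braid_rrr hl hl1
      calc rg (j+1) hl1 * (rg j hl * (rg (j+1) hl1 * Erun (j+2) m))
          = (rg (j+1) hl1 * rg j hl * rg (j+1) hl1) * Erun (j+2) m := by group
        _ = (rg j hl * rg (j+1) hl1 * rg j hl) * Erun (j+2) m := by rw [← hbr]
        _ = rg j hl * rg (j+1) hl1 * (rg j hl * Erun (j+2) m) := by group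
        _ = rg j hl * rg (j+1) hl1 * (Erun (j+2) m * rg j hl) := by rw [hE.eq]
        _ = rg j hl * (rg (j+1) hl1 * Erun (j+2) m) * rg j hl := by group
    · rw [Erun_step (by omega) hmn]
      have hc : Commute (rg (n:=n) j (by omega)) (rg (l+1) hl1) :=
        comm_rr (by omega) hl1 (by omega)
      calc rg (l+1) hl1 * (rg j (by omega) * Erun (j+1) m)
          = rg j (by omega) * (rg (l+1) hl1 * Erun (j+1) m) := by
            rw [← mul_assoc, ← hc.eq, mul_assoc]
        _ = rg j (by omega) * (Erun (j+1) m * rg l hl) := by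
            rw [ih (j+1) (by omega) (by omega) hlm hmn]
        _ = rg j (by omega) * Erun (j+1) m * rg l hl := by group

def TT {n : ℕ} : ℕ → Equiv.Perm (Fin n) → VT n
  | 0, _ => 1
  | (m+1), σ =>
    if h : m < n then
      Erun (σ ⟨m, h⟩).1 m * TT m ((perm n (Erun (σ ⟨m, h⟩).1 m))⁻¹ * σ)
    else 1

lemma TT_succ (m : ℕ) (σ : Equiv.Perm (Fin n)) (h : m < n) :
    TT (m+1) σ
      = Erun (σ ⟨m, h⟩).1 m * TT m ((perm n (Erun (σ ⟨m, h⟩).1 m))⁻¹ * σ) := by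
  rw [TT]
  exact dif_pos h

def BlockInv (m : ℕ) (σ : Equiv.Perm (Fin n)) : Prop :=
  ∀ x : Fin n, m ≤ x.1 → σ x = x

lemma blockInv_top (σ : Equiv.Perm (Fin n)) : BlockInv n σ :=
  fun x hx => absurd x.2 (by omega)

lemma blockInv_val_le {m : ℕ} {σ : Equiv.Perm (Fin n)} (h : BlockInv (m+1) σ)
    (hm : m < n) : (σ ⟨m, hm⟩).1 ≤ m := by
  by_contra hgt
  push_neg at hgt
  have h1 : σ (σ ⟨m, hm⟩) = σ ⟨m, hm⟩ := h (σ ⟨m, hm⟩) hgt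
  have h2 : σ ⟨m, hm⟩ = ⟨m, hm⟩ := σ.injective h1
  have h3 : (σ ⟨m, hm⟩).1 = m := congrArg Fin.val h2
  omega

lemma blockInv_next {m : ℕ} {σ : Equiv.Perm (Fin n)} (h : BlockInv (m+1) σ)
    (hm : m < n) (hm1 : m ≤ n-1) :
    BlockInv m ((perm n (Erun (σ ⟨m, hm⟩).1 m))⁻¹ * σ) := by
  intro x hx
  rw [Equiv.Perm.mul_apply]
  by_cases hxm : x.1 = m
  · have hxe : x = ⟨m, hm⟩ := Fin.ext hxm
    subst hxe
    have htop : perm n (Erun (σ ⟨m, hm⟩).1 m) ⟨m, hm⟩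
        = ⟨(σ ⟨m, hm⟩).1, by omega⟩ :=
      perm_Erun_top hm1 hm m _ (by omega) (blockInv_val_le h hm)
    have : perm n (Erun (σ ⟨m, hm⟩).1 m) ⟨m, hm⟩ = σ ⟨m, hm⟩ := by
      rw [htop]
    rw [Equiv.Perm.inv_eq_iff_eq]
    exact this.symm
  · have hσx : σ x = x := h x (by omega)
    rw [hσx]
    have : perm n (Erun (σ ⟨m, hm⟩).1 m) x = x :=
      perm_Erun_gt m _ (by omega) x (by omega)
    rw [Equiv.Perm.inv_eq_iff_eq]
    exact this.symm

lemma TT_one : ∀ m, TT (n:=n) m 1 = 1 := by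
  intro m
  induction m with
  | zero => rfl
  | succ m ih =>
    by_cases h : m < n
    · rw [TT_succ m 1 h]
      have h1 : ((1 : Equiv.Perm (Fin n)) ⟨m, h⟩).1 = m := rfl
      rw [h1, Erun_stop (by omega), map_one, one_mul, inv_one, one_mul, ih]
    · rw [TT]
      simp [h]

lemma perm_TT : ∀ m, m ≤ n → ∀ σ : Equiv.Perm (Fin n), BlockInv m σ →
    perm n (TT m σ) = σ := by
  intro m
  induction m with
  | zero =>
    intro _ σ hσ
    have : σ = 1 := Equiv.ext fun x => hσ x (Nat.zero_le _)
    rw [this]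
    rfl
  | succ m ih =>
    intro hmn σ hσ
    have hm : m < n := by omega
    rw [TT_succ m σ hm, map_mul,
      ih (by omega) _ (blockInv_next hσ hm (by omega))]
    group

lemma TT_key : ∀ m, ∀ (hm : m < n) (hm1 : m ≤ n-1) k (hk : k < n-1) (hkm : k < m)
    (σ : Equiv.Perm (Fin n)) (hσ : BlockInv (m+1) σ),
    rg k hk * TT (m+1) σ = TT (m+1) (perm n (rg k hk) * σ) := by
  intro m
  induction m with
  | zero => intro _ _ k _ hkm; omega
  | succ m' ih =>
    intro hm hm1 k hk hkm σ hσ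
    set m := m' + 1 with hmdef
    have hj : (σ ⟨m, hm⟩).1 ≤ m := blockInv_val_le hσ hm
    have hσm : σ ⟨m, hm⟩ = ⟨(σ ⟨m, hm⟩).1, (σ ⟨m, hm⟩).2⟩ := rfl
    have hval : ((perm n (rg k hk) * σ) ⟨m, hm⟩)
        = tr ⟨k, hk⟩ (σ ⟨m, hm⟩) := by
      rw [perm_rg]; rfl
    rw [TT_succ m σ hm, TT_succ m _ hm]
    rcases Nat.lt_trichotomy k (σ ⟨m, hm⟩).1 with hc | hc | hc
    · rcases Nat.lt_or_ge (k+1) (σ ⟨m, hm⟩).1 with hc2 | hc2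
      · -- case A : k + 1 < j, ρ_k commutes into the next level
        have hj2 : ((perm n (rg k hk) * σ) ⟨m, hm⟩).1 = (σ ⟨m, hm⟩).1 := by
          rw [hval, tr_apply]
          simp only []
          rw [if_neg (by omega), if_neg (by omega)]
        rw [hj2]
        have hcomm : Commute (rg (n:=n) k hk) (Erun (σ ⟨m, hm⟩).1 m) :=
          comm_Erun (j₀ := 0) hk m _ (by omega) (by omega)
        have hcP : Commute (perm n (rg (n:=n) k hk))
            (perm n (Erun (σ ⟨m, hm⟩).1 m)) := hcomm.map (perm n)
        calc rg k hk * (Erun (σ ⟨m, hm⟩).1 m *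
                TT m ((perm n (Erun (σ ⟨m, hm⟩).1 m))⁻¹ * σ))
            = Erun (σ ⟨m, hm⟩).1 m * (rg k hk *
                TT m ((perm n (Erun (σ ⟨m, hm⟩).1 m))⁻¹ * σ)) := by
              rw [← mul_assoc, hcomm.eq, mul_assoc]
          _ = Erun (σ ⟨m, hm⟩).1 m * TT m (perm n (rg k hk) *
                ((perm n (Erun (σ ⟨m, hm⟩).1 m))⁻¹ * σ)) := by
              rw [ih (by omega) (by omega) k hk (by omega) _
                (blockInv_next hσ hm hm1)]
          _ = Erun (σ ⟨m, hm⟩).1 m * TT m ((perm n (Erun (σ ⟨m, hm⟩).1 m))⁻¹ *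
                (perm n (rg k hk) * σ)) := by
              rw [← mul_assoc, (hcP.inv_right).eq, mul_assoc]
      · -- case B : k + 1 = j
        have hc2' : k + 1 = (σ ⟨m, hm⟩).1 := by omega
        have hj2 : ((perm n (rg k hk) * σ) ⟨m, hm⟩).1 = k := by
          rw [hval, tr_apply]
          simp only []
          rw [if_neg (by omega), if_pos (by omega)]
        rw [hj2]
        have hstep : Erun (n:=n) k m = rg k hk * Erun (k+1) m :=
          Erun_step (by omega) (by omega)
        have hE : Erun (n:=n) (k+1) m = Erun (σ ⟨m, hm⟩).1 m := by rw [hc2']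
        have harg : (perm n (Erun (n:=n) k m))⁻¹ * (perm n (rg k hk) * σ)
            = (perm n (Erun (σ ⟨m, hm⟩).1 m))⁻¹ * σ := by
          rw [hstep, hE, map_mul]
          group
        rw [harg, hstep, hE, mul_assoc]
    · -- case C : k = j
      have hj2 : ((perm n (rg k hk) * σ) ⟨m, hm⟩).1 = k + 1 := by
        rw [hval, tr_apply]
        simp only []
        rw [if_pos (by omega)]
      rw [hj2]
      have hstep : Erun (n:=n) (σ ⟨m, hm⟩).1 m = rg k hk * Erun (k+1) m := by
        rw [← hc]
        exact Erun_step (by omega) (by omega)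
      have harg : (perm n (Erun (σ ⟨m, hm⟩).1 m))⁻¹ * σ
          = (perm n (Erun (n:=n) (k+1) m))⁻¹ * (perm n (rg k hk))⁻¹ * σ := by
        rw [hstep, map_mul]
        group
      have hτinv : (perm n (rg (n:=n) k hk))⁻¹ = perm n (rg k hk) := by
        rw [perm_rg, tr_inv]
      rw [harg, hstep, hτinv]
      calc rg k hk * (rg k hk * Erun (k+1) m *
              TT m ((perm n (Erun (n:=n) (k+1) m))⁻¹ * perm n (rg k hk) * σ))
          = (rg k hk * rg k hk) * (Erun (k+1) m *
              TT m ((perm n (Erun (n:=n) (k+1) m))⁻¹ * perm n (rg k hk) * σ)) := by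
            group
        _ = Erun (k+1) m *
              TT m ((perm n (Erun (n:=n) (k+1) m))⁻¹ * (perm n (rg k hk) * σ)) := by
            rw [rg_mul_self, one_mul, mul_assoc]
    · -- case D : k > j
      obtain ⟨l, rfl⟩ : ∃ l, k = l + 1 := ⟨k - 1, by omega⟩
      have hl : l < n - 1 := by omega
      have hj2 : ((perm n (rg (l+1) hk) * σ) ⟨m, hm⟩).1 = (σ ⟨m, hm⟩).1 := by
        rw [hval, tr_apply]
        simp only []
        rw [if_neg (by omega), if_neg (by omega)]
      rw [hj2]
      have hW : rg (l+1) hk * Erun (σ ⟨m, hm⟩).1 m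
          = Erun (n:=n) (σ ⟨m, hm⟩).1 m * rg l hl :=
        rg_mul_Erun hl hk m _ (by omega) (by omega) (by omega) (by omega)
      have hPerm : perm n (rg (n:=n) (l+1) hk) * perm n (Erun (σ ⟨m, hm⟩).1 m)
          = perm n (Erun (σ ⟨m, hm⟩).1 m) * perm n (rg l hl) := by
        have := congrArg (perm n) hW
        simpa [map_mul] using this
      have h2 : perm n (rg (n:=n) l hl) * (perm n (Erun (σ ⟨m, hm⟩).1 m))⁻¹
          = (perm n (Erun (σ ⟨m, hm⟩).1 m))⁻¹ * perm n (rg (l+1) hk) := by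
        calc perm n (rg (n:=n) l hl) * (perm n (Erun (σ ⟨m, hm⟩).1 m))⁻¹
            = (perm n (Erun (σ ⟨m, hm⟩).1 m))⁻¹ *
              (perm n (Erun (σ ⟨m, hm⟩).1 m) * perm n (rg l hl) *
                (perm n (Erun (σ ⟨m, hm⟩).1 m))⁻¹) := by group
          _ = (perm n (Erun (σ ⟨m, hm⟩).1 m))⁻¹ *
              (perm n (rg (l+1) hk) * perm n (Erun (σ ⟨m, hm⟩).1 m) *
                (perm n (Erun (σ ⟨m, hm⟩).1 m))⁻¹) := by rw [← hPerm]
          _ = (perm n (Erun (σ ⟨m, hm⟩).1 m))⁻¹ * perm n (rg (l+1) hk) := by group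
      calc rg (l+1) hk * (Erun (σ ⟨m, hm⟩).1 m *
              TT m ((perm n (Erun (σ ⟨m, hm⟩).1 m))⁻¹ * σ))
          = Erun (σ ⟨m, hm⟩).1 m * (rg l hl *
              TT m ((perm n (Erun (σ ⟨m, hm⟩).1 m))⁻¹ * σ)) := by
            rw [← mul_assoc, hW, mul_assoc]
        _ = Erun (σ ⟨m, hm⟩).1 m * TT m (perm n (rg l hl) *
              ((perm n (Erun (σ ⟨m, hm⟩).1 m))⁻¹ * σ)) := by
            rw [ih (by omega) (by omega) l hl (by omega) _
              (blockInv_next hσ hm hm1)]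
        _ = Erun (σ ⟨m, hm⟩).1 m * TT m ((perm n (Erun (σ ⟨m, hm⟩).1 m))⁻¹ *
              (perm n (rg (l+1) hk) * σ)) := by
            rw [← mul_assoc, h2, mul_assoc]


def tr2 (i : Fin (n-1)) : Sym2 (Fin n) → Sym2 (Fin n) := Sym2.map (tr i)

def q0 (i : Fin (n-1)) : Sym2 (Fin n) :=
  s(⟨i.1, by have := i.2; omega⟩, ⟨i.1+1, by have := i.2; omega⟩)

def dd (i : Fin (n-1)) : Sym2 (Fin n) → ZMod 2 := fun p => if p = q0 i then 1 else 0

lemma tr_fix {i : Fin (n-1)} {x : Fin n} (h1 : x.1 ≠ i.1) (h2 : x.1 ≠ i.1+1) :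
    tr i x = x := by
  rw [tr_apply, if_neg h1, if_neg h2]

lemma tr_mk_fix (j : Fin (n-1)) (v : ℕ) (hv : v < n) (h1 : v ≠ j.1) (h2 : v ≠ j.1+1) :
    tr j ⟨v, hv⟩ = ⟨v, hv⟩ := tr_fix h1 h2

lemma tr_mk_eq (j : Fin (n-1)) (v : ℕ) (hv : v < n) (h : v = j.1) :
    tr j ⟨v, hv⟩ = ⟨j.1+1, by have := j.2; omega⟩ := by
  subst h
  exact Equiv.swap_apply_left _ _

lemma tr_mk_succ (j : Fin (n-1)) (v : ℕ) (hv : v < n) (h : v = j.1 + 1) :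
    tr j ⟨v, hv⟩ = ⟨j.1, by have := j.2; omega⟩ := by
  subst h
  exact Equiv.swap_apply_right _ _

lemma tr2_invol (i : Fin (n-1)) : ∀ p, tr2 i (tr2 i p) = p := by
  intro p
  unfold tr2
  rw [Sym2.map_map, show (⇑(tr (n:=n) i) ∘ ⇑(tr i)) = id from funext (tr_involutive i)]
  exact congrFun Sym2.map_id p

lemma tr2_eq_iff {i : Fin (n-1)} {p q : Sym2 (Fin n)} : tr2 i p = q ↔ p = tr2 i q := by
  constructor
  · intro h; rw [← h, tr2_invol]
  · intro h; rw [h, tr2_invol]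

lemma dd_tr2 {i j : Fin (n-1)} (h : tr2 i (q0 j) = q0 j) (p : Sym2 (Fin n)) :
    dd j (tr2 i p) = dd j p := by
  unfold dd
  congr 1
  apply propext
  constructor
  · intro h'
    rw [tr2_eq_iff] at h'
    rwa [← h]
  · intro h'
    rw [h', h]

lemma zmod2_add_self (z : ZMod 2) : z + z = 0 := by
  revert z
  decide

lemma tr2_q0_self (i : Fin (n-1)) : tr2 (n:=n) i (q0 i) = q0 i := by
  unfold tr2 q0
  rw [Sym2.map_pair_eq, tr_mk_eq i i.1 _ rfl, tr_mk_succ i (i.1+1) _ rfl]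
  exact Sym2.eq_swap

lemma tr2_q0_far {i j : Fin (n-1)} (h : i.1 ≠ j.1 ∧ i.1 ≠ j.1 + 1 ∧ i.1 + 1 ≠ j.1 ∧ i.1+1 ≠ j.1+1) :
    tr2 (n:=n) j (q0 i) = q0 i := by
  unfold tr2 q0
  rw [Sym2.map_pair_eq, tr_mk_fix j i.1 _ (by omega) (by omega),
    tr_mk_fix j (i.1+1) _ (by omega) (by omega)]

def RAf (i : Fin (n-1)) : (Sym2 (Fin n) → ZMod 2) → (Sym2 (Fin n) → ZMod 2) :=
  fun f p => f (tr2 i p)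

def SAf (i : Fin (n-1)) : (Sym2 (Fin n) → ZMod 2) → (Sym2 (Fin n) → ZMod 2) :=
  fun f p => f (tr2 i p) + dd i p

lemma RAf_invol (i : Fin (n-1)) : Function.Involutive (RAf (n:=n) i) := by
  intro f
  funext p
  simp only [RAf, tr2_invol]

lemma SAf_invol (i : Fin (n-1)) : Function.Involutive (SAf (n:=n) i) := by
  intro f
  funext p
  simp only [SAf]
  rw [tr2_invol, dd_tr2 (tr2_q0_self i), add_assoc, zmod2_add_self, add_zero]

def RA (i : Fin (n-1)) : Equiv.Perm (Sym2 (Fin n) → ZMod 2) :=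
  (RAf_invol i).toPerm _

def SA (i : Fin (n-1)) : Equiv.Perm (Sym2 (Fin n) → ZMod 2) :=
  (SAf_invol i).toPerm _

lemma RA_apply (i : Fin (n-1)) (f : Sym2 (Fin n) → ZMod 2) (p) :
    RA i f p = f (tr2 i p) := rfl

lemma SA_apply (i : Fin (n-1)) (f : Sym2 (Fin n) → ZMod 2) (p) :
    SA i f p = f (tr2 i p) + dd i p := rfl

lemma RA_sq (i : Fin (n-1)) : RA (n:=n) i * RA i = 1 :=
  Equiv.ext fun f => RAf_invol i f

lemma SA_sq (i : Fin (n-1)) : SA (n:=n) i * SA i = 1 :=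
  Equiv.ext fun f => SAf_invol i f

lemma tr2_map_comm {i j : Fin (n-1)} (h : Commute (tr (n:=n) i) (tr j)) :
    ∀ p, tr2 i (tr2 j p) = tr2 j (tr2 i p) := by
  intro p
  unfold tr2
  rw [Sym2.map_map, Sym2.map_map]
  congr 1
  funext x
  have := congrArg (fun (e : Equiv.Perm (Fin n)) => e x) h.eq
  simpa using this

lemma far_conds {i j : Fin (n-1)} (hij : i.1 + 2 ≤ j.1) :
    (j.1 ≠ i.1 ∧ j.1 ≠ i.1 + 1 ∧ j.1 + 1 ≠ i.1 ∧ j.1+1 ≠ i.1+1) ∧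
    (i.1 ≠ j.1 ∧ i.1 ≠ j.1 + 1 ∧ i.1 + 1 ≠ j.1 ∧ i.1+1 ≠ j.1+1) := by omega

lemma SA_SA_commute {i j : Fin (n-1)} (hij : i.1 + 2 ≤ j.1) :
    Commute (SA (n:=n) i) (SA j) := by
  have hmap := tr2_map_comm (tr_commute hij)
  apply Equiv.ext
  intro f
  funext p
  simp only [Equiv.Perm.mul_apply, SA_apply]
  rw [hmap, dd_tr2 (tr2_q0_far (far_conds hij).1) p, dd_tr2 (tr2_q0_far (far_conds hij).2) p]
  ring

lemma RA_RA_commute {i j : Fin (n-1)} (hij : i.1 + 2 ≤ j.1) :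
    Commute (RA (n:=n) i) (RA j) := by
  have hmap := tr2_map_comm (tr_commute hij)
  apply Equiv.ext
  intro f
  funext p
  simp only [Equiv.Perm.mul_apply, RA_apply]
  rw [hmap]

lemma RA_SA_commute {i j : Fin (n-1)} (hij : i.1 + 2 ≤ j.1) :
    Commute (RA (n:=n) i) (SA j) := by
  have hmap := tr2_map_comm (tr_commute hij)
  apply Equiv.ext
  intro f
  funext p
  simp only [Equiv.Perm.mul_apply, SA_apply, RA_apply]
  rw [hmap, dd_tr2 (tr2_q0_far (far_conds hij).1) p]

lemma SA_RA_commute {i j : Fin (n-1)} (hij : i.1 + 2 ≤ j.1) :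
    Commute (SA (n:=n) i) (RA j) := by
  have hmap := tr2_map_comm (tr_commute hij)
  apply Equiv.ext
  intro f
  funext p
  simp only [Equiv.Perm.mul_apply, SA_apply, RA_apply]
  rw [hmap, dd_tr2 (tr2_q0_far (far_conds hij).2) p]

lemma tr2_triple {i j : Fin (n-1)} (h : (j : ℕ) = (i : ℕ) + 1) (p : Sym2 (Fin n)) :
    tr2 i (tr2 j (tr2 i p)) = tr2 j (tr2 i (tr2 j p)) := by
  have hb := tr_braid (n:=n) (i := i) (j := j) h
  have hpt : ∀ x, tr i (tr j (tr (n:=n) i x)) = tr j (tr i (tr j x)) := by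
    intro x
    have := congrArg (fun (e : Equiv.Perm (Fin n)) => e x) hb
    simpa using this
  unfold tr2
  rw [Sym2.map_map, Sym2.map_map, Sym2.map_map, Sym2.map_map]
  congr 1
  funext x
  exact hpt x

lemma tr2_q0_braid {i j : Fin (n-1)} (h : (j : ℕ) = (i : ℕ) + 1) :
    tr2 i (tr2 j (q0 i)) = q0 j := by
  unfold tr2 q0
  rw [Sym2.map_pair_eq, tr_mk_fix j i.1 (by have := i.2; omega)
      (show i.1 ≠ j.1 by omega) (show i.1 ≠ j.1 + 1 by omega),
    tr_mk_eq j (i.1+1) (by have := j.2; omega) (show i.1 + 1 = j.1 by omega)]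
  rw [Sym2.map_pair_eq, tr_mk_eq i i.1 (by have := i.2; omega) rfl,
    tr_mk_fix i (j.1+1) (by have := j.2; omega)
      (show j.1 + 1 ≠ i.1 by omega) (show j.1 + 1 ≠ i.1 + 1 by omega)]
  have e1 : (⟨i.1+1, by have := i.2; omega⟩ : Fin n) = ⟨j.1, by have := j.2; omega⟩ :=
    Fin.ext (show i.1 + 1 = j.1 by omega)
  rw [e1]

lemma dd_braid {i j : Fin (n-1)} (h : (j : ℕ) = (i : ℕ) + 1) (p : Sym2 (Fin n)) :
    dd i (tr2 j (tr2 i p)) = dd j p := by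
  unfold dd
  congr 1
  apply propext
  constructor
  · intro h'
    rw [tr2_eq_iff] at h'
    rw [tr2_eq_iff] at h'
    rwa [tr2_q0_braid h] at h'
  · intro h'
    rw [h', ← tr2_q0_braid h, tr2_invol, tr2_invol]

lemma braid_RRS {i j : Fin (n-1)} (h : (j : ℕ) = (i : ℕ) + 1) :
    RA (n:=n) i * RA j * SA i = SA j * RA i * RA j := by
  apply Equiv.ext
  intro f
  funext p
  simp only [Equiv.Perm.mul_apply, SA_apply, RA_apply]
  rw [tr2_triple h, dd_braid h]

lemma braid_RRR {i j : Fin (n-1)} (h : (j : ℕ) = (i : ℕ) + 1) :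
    RA (n:=n) i * RA j * RA i = RA j * RA i * RA j := by
  apply Equiv.ext
  intro f
  funext p
  simp only [Equiv.Perm.mul_apply, RA_apply]
  rw [tr2_triple h]

def Phi (n : ℕ) : VT n →* Equiv.Perm (Sym2 (Fin n) → ZMod 2) :=
  PresentedGroup.toGroup (f := Sum.elim SA RA) (by
    rintro w (⟨i, rfl⟩ | ⟨i, j, hij, rfl⟩ | ⟨i, rfl⟩ | ⟨i, j, hij, rfl⟩ |
      ⟨i, j, hij, rfl⟩ | ⟨i, j, hij, (rfl | rfl)⟩ | ⟨i, j, hij, rfl⟩)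
    · simp only [map_mul, fs, FreeGroup.lift_apply_of, Sum.elim_inl]
      exact SA_sq i
    · rw [map_commutatorElement]
      simp only [fs, FreeGroup.lift_apply_of, Sum.elim_inl]
      exact commutatorElement_eq_one_iff_commute.mpr (SA_SA_commute hij)
    · simp only [map_mul, fr, FreeGroup.lift_apply_of, Sum.elim_inr]
      exact RA_sq i
    · rw [map_commutatorElement]
      simp only [fr, FreeGroup.lift_apply_of, Sum.elim_inr]
      exact commutatorElement_eq_one_iff_commute.mpr (RA_RA_commute hij)
    · simp only [map_mul, map_inv, fr, FreeGroup.lift_apply_of, Sum.elim_inr]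
      rw [braid_RRR hij, mul_inv_cancel]
    · rw [map_commutatorElement]
      simp only [fr, fs, FreeGroup.lift_apply_of, Sum.elim_inl, Sum.elim_inr]
      exact commutatorElement_eq_one_iff_commute.mpr (RA_SA_commute hij)
    · rw [map_commutatorElement]
      simp only [fr, fs, FreeGroup.lift_apply_of, Sum.elim_inl, Sum.elim_inr]
      exact commutatorElement_eq_one_iff_commute.mpr (SA_RA_commute hij)
    · simp only [map_mul, map_inv, fr, fs, FreeGroup.lift_apply_of, Sum.elim_inl, Sum.elim_inr]
      rw [braid_RRS hij, mul_inv_cancel])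

lemma Phi_rg {k : ℕ} (hk : k < n-1) : Phi n (rg k hk) = RA ⟨k, hk⟩ := by
  unfold Phi rg
  rw [PresentedGroup.toGroup.of]
  rfl

lemma Phi_sg {k : ℕ} (hk : k < n-1) : Phi n (sg k hk) = SA ⟨k, hk⟩ := by
  unfold Phi sg
  rw [PresentedGroup.toGroup.of]
  rfl

lemma RA_zero (i : Fin (n-1)) : RA (n:=n) i 0 = 0 := rfl

lemma Phi_lamN {a : ℕ} (ha : a < n) :
    ∀ b (hab : a < b) (hbn : b < n) (p : Sym2 (Fin n)),
      Phi n (lamN a b) 0 p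
        = if p = s((⟨a, ha⟩ : Fin n), (⟨b, hbn⟩ : Fin n)) then (1 : ZMod 2) else 0 := by
  intro b
  induction b using Nat.strong_induction_on with
  | _ b ih =>
    intro hab hbn p
    by_cases hb : b = a + 1
    · subst hb
      rw [lamN_base (by omega), map_mul, Phi_sg, Phi_rg, Equiv.Perm.mul_apply, RA_zero,
        SA_apply]
      simp only [Pi.zero_apply, zero_add]
      rfl
    · obtain ⟨c, rfl⟩ : ∃ c, b = c + 1 := ⟨b - 1, by omega⟩
      have hc : c < n - 1 := by omega
      rw [lamN_step' (by omega) hbn, map_mul, map_mul, Phi_rg,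
        Equiv.Perm.mul_apply, Equiv.Perm.mul_apply, RA_zero, RA_apply,
        ih c (by omega) (by omega) (by omega) (tr2 ⟨c, hc⟩ p)]
      have hkey : tr2 (⟨c, hc⟩ : Fin (n-1)) (s((⟨a, ha⟩ : Fin n), (⟨c+1, hbn⟩ : Fin n)))
          = s((⟨a, ha⟩ : Fin n), (⟨c, by omega⟩ : Fin n)) := by
        unfold tr2
        rw [Sym2.map_pair_eq, tr_mk_fix ⟨c, hc⟩ a (by omega)
            (show a ≠ c by omega) (show a ≠ c + 1 by omega),
          tr_mk_succ ⟨c, hc⟩ (c+1) (by omega) rfl]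
      congr 1
      apply propext
      constructor
      · intro h'
        rw [tr2_eq_iff] at h'
        rw [h', ← hkey, tr2_invol]
      · intro h'
        rw [h', hkey]

lemma lam_injective : Function.Injective (lam (n := n)) := by
  intro p q hpq
  have hpa : (p.1.1 : ℕ) < (p.1.2 : ℕ) := p.2
  have hqa : (q.1.1 : ℕ) < (q.1.2 : ℕ) := q.2
  have h1 : Phi n (lam p) 0 (s((⟨p.1.1.1, by omega⟩ : Fin n), (⟨p.1.2.1, p.1.2.2⟩ : Fin n)))
      = Phi n (lam q) 0 (s((⟨p.1.1.1, by omega⟩ : Fin n), (⟨p.1.2.1, p.1.2.2⟩ : Fin n))) := by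
    rw [hpq]
  rw [lam_eq p, lam_eq q, Phi_lamN (by omega) _ hpa p.1.2.2 _,
    Phi_lamN (by omega) _ hqa q.1.2.2 _, if_pos rfl] at h1
  by_cases hq : s((⟨p.1.1.1, by omega⟩ : Fin n), (⟨p.1.2.1, p.1.2.2⟩ : Fin n))
      = s((⟨q.1.1.1, by omega⟩ : Fin n), (⟨q.1.2.1, q.1.2.2⟩ : Fin n))
  · rw [Sym2.eq_iff] at hq
    have hvals : p.1.1.1 = q.1.1.1 ∧ p.1.2.1 = q.1.2.1 := by
      rcases hq with ⟨h3, h4⟩ | ⟨h3, h4⟩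
      · exact ⟨congrArg Fin.val h3, congrArg Fin.val h4⟩
      · have e3 : p.1.1.1 = q.1.2.1 := congrArg Fin.val h3
        have e4 : p.1.2.1 = q.1.1.1 := congrArg Fin.val h4
        omega
    apply Subtype.ext
    apply Prod.ext (Fin.ext hvals.1) (Fin.ext hvals.2)
  · rw [if_neg hq] at h1
    exact absurd h1 (by decide)


def TSub (n : ℕ) : Subgroup (VT n) where
  carrier := {g | ∀ σ : Equiv.Perm (Fin n),
    g * TT n σ * (TT n (perm n g * σ))⁻¹ ∈ KK n}
  one_mem' := by
    intro σ
    simp only [one_mul, map_one]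
    rw [mul_inv_cancel]
    exact one_mem _
  mul_mem' := by
    intro a b ha hb σ
    have h1 := hb σ
    have h2 := ha (perm n b * σ)
    have key : a * b * TT n σ * (TT n (perm n (a * b) * σ))⁻¹
        = (a * (b * TT n σ * (TT n (perm n b * σ))⁻¹) * a⁻¹) *
          (a * TT n (perm n b * σ) * (TT n (perm n a * (perm n b * σ)))⁻¹) := by
      rw [map_mul, mul_assoc (perm n a)]
      group
    rw [key]
    exact mul_mem (K_normal a _ h1) h2
  inv_mem' := by
    intro a ha σ
    have hps : perm n a * (perm n a⁻¹ * σ) = σ := by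
      rw [map_inv, ← mul_assoc, mul_inv_cancel, one_mul]
    have h2 := ha (perm n a⁻¹ * σ)
    rw [hps] at h2
    have key : a⁻¹ * TT n σ * (TT n (perm n a⁻¹ * σ))⁻¹
        = a⁻¹ * (a * TT n (perm n a⁻¹ * σ) * (TT n σ)⁻¹)⁻¹ * a⁻¹⁻¹ := by
      group
    rw [key]
    exact K_normal a⁻¹ _ (inv_mem h2)

lemma rg_key {k : ℕ} (hk : k < n-1) (σ : Equiv.Perm (Fin n)) :
    rg k hk * TT n σ = TT n (perm n (rg k hk) * σ) := by
  have e : n - 1 + 1 = n := by omega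
  have hB : BlockInv (n - 1 + 1) σ := by rw [e]; exact blockInv_top σ
  have := TT_key (n-1) (by omega) (by omega) k hk (by omega) σ hB
  rwa [e] at this

lemma rg_mem_TSub {k : ℕ} (hk : k < n-1) : rg (n:=n) k hk ∈ TSub n := by
  intro σ
  rw [← rg_key hk σ, mul_inv_cancel]
  exact one_mem _

lemma sg_mem_TSub {k : ℕ} (hk : k < n-1) : sg (n:=n) k hk ∈ TSub n := by
  intro σ
  have hps : perm n (sg k hk) = perm n (rg k hk) := by rw [perm_sg, perm_rg]
  have key : sg k hk * TT n σ * (TT n (perm n (sg k hk) * σ))⁻¹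
      = lamN k (k+1) * (rg k hk * TT n σ) * (TT n (perm n (rg k hk) * σ))⁻¹ := by
    rw [hps, sg_eq_lam_mul_rg hk]
    group
  rw [key, rg_key hk σ]
  have : lamN (n:=n) k (k+1) * TT n (perm n (rg k hk) * σ) *
      (TT n (perm n (rg k hk) * σ))⁻¹ = lamN k (k+1) := by group
  rw [this]
  exact lamN_mem (by omega) (by omega)

lemma ker_le_K : (perm n).ker ≤ KK n := by
  intro x hx
  have hmem : x ∈ TSub n := by
    refine PresentedGroup.generated_by _ _ ?_ x
    rintro (i | i)
    · exact sg_mem_TSub i.2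
    · exact rg_mem_TSub i.2
  have h1 := hmem 1
  rw [MonoidHom.mem_ker] at hx
  rw [hx, one_mul, TT_one] at h1
  simpa using h1

lemma K_le_ker : KK n ≤ (perm n).ker := by
  rw [KK]
  rw [Subgroup.closure_le]
  rintro x ⟨p, rfl⟩
  have hpa : (p.1.1 : ℕ) < (p.1.2 : ℕ) := p.2
  simp only [SetLike.mem_coe, MonoidHom.mem_ker]
  rw [lam_eq p]
  exact perm_lamN_eq_one p.1.2.1 hpa p.1.2.2

def vtxEquiv (n : ℕ) : Vtx n ≃ Σ j : Fin n, Fin j.1 where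
  toFun p := ⟨p.1.2, ⟨p.1.1.1, p.2⟩⟩
  invFun x := ⟨(⟨x.2.1, lt_trans x.2.2 x.1.2⟩, x.1), x.2.2⟩
  left_inv := by rintro ⟨⟨a, b⟩, h⟩; rfl
  right_inv := by rintro ⟨j, i⟩; rfl

lemma card_vtx (n : ℕ) : Nat.card (Vtx n) = n * (n - 1) / 2 := by
  rw [Nat.card_congr (vtxEquiv n), Nat.card_eq_fintype_card, Fintype.card_sigma]
  simp only [Fintype.card_fin]
  rw [Fin.sum_univ_eq_sum_range (fun i => i) n, Finset.sum_range_id]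


end AuxLemmas

/-- `PVT_n` is generated by the `λ_{i,j}`, `1 ≤ i < j ≤ n`; in particular this generating
set has `n(n-1)/2` elements. -/
theorem pvt_generated_by_lam (n : ℕ) (hn : 2 ≤ n) :
    Subgroup.closure (Set.range (lam (n := n))) = (perm n).ker ∧
      Nat.card (Set.range (lam (n := n))) = n * (n - 1) / 2 := by
  constructor
  · exact le_antisymm K_le_ker ker_le_K
  · rw [Nat.card_range_of_injective lam_injective, card_vtx]

end VTG
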